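/- For all τ ∈ ℝ, v(τ)²·φ′(τ)·φ″(τ) + φ′(τ)²·v(τ)·v′(τ) + v′(τ)·v″(τ) = c₂³·(1 − H(τ)²)²·P(H(τ)), and consequently the derivative of g satisfies g′(τ) = 2·c₂³·(1 − H(τ)²)²·P(H(τ)). -/

import Mathlib

private lemma tanh_hasDerivAt (x : ℝ) :
    HasDerivAt Real.tanh (1 - Real.tanh x ^ 2) x := by
  have hc : Real.cosh x ≠ 0 := (Real.cosh_pos x).ne'
  have h := (Real.hasDerivAt_sinh x).div (Real.hasDerivAt_cosh x) hc
  have heq : (Real.cosh x * Real.cosh x - Real.sinh x * Real.sinh x) / Real.cosh x ^ 2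
      = 1 - Real.tanh x ^ 2 := by
    rw [Real.tanh_eq_sinh_div_cosh, div_pow]
    field_simp
  have hfun : Real.tanh = fun y => Real.sinh y / Real.cosh y := by
    funext y; exact Real.tanh_eq_sinh_div_cosh y
  rw [← heq, hfun]
  exact h

private lemma inner_hasDerivAt (c₂ c₃ τ : ℝ) :
    HasDerivAt (fun τ : ℝ => Real.tanh (c₂ * τ - c₃))
      (c₂ * (1 - Real.tanh (c₂ * τ - c₃) ^ 2)) τ := by
  have hu : HasDerivAt (fun τ : ℝ => c₂ * τ - c₃) c₂ τ := by
    simpa using ((hasDerivAt_id τ).const_mul c₂).sub_const c₃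
  have := (tanh_hasDerivAt (c₂ * τ - c₃)).comp τ hu
  exact this.congr_deriv (by ring)

theorem sigmoid_acceleration_derivative
    (c₁ c₂ c₃ c₄ d₁ d₄ : ℝ) (hc₂ : 0 < c₂)
    (φ v H g P : ℝ → ℝ)
    (hφ : ∀ τ, φ τ = c₁ * Real.tanh (c₂ * τ - c₃) + c₄)
    (hv : ∀ τ, v τ = d₁ * Real.tanh (c₂ * τ - c₃) + d₄)
    (hH : ∀ τ, H τ = Real.tanh (c₂ * τ - c₃))
    (hP : ∀ h, P h = -3 * c₁ ^ 2 * d₁ ^ 2 * h ^ 3 - 5 * c₁ ^ 2 * d₁ * d₄ * h ^ 2 +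
      (c₁ ^ 2 * d₁ ^ 2 - 2 * c₁ ^ 2 * d₄ ^ 2 - 2 * d₁ ^ 2) * h + c₁ ^ 2 * d₁ * d₄)
    (hg : ∀ τ, g τ = (v τ) ^ 2 * (deriv φ τ) ^ 2 + (deriv v τ) ^ 2) :
    ∀ τ : ℝ,
      (v τ) ^ 2 * deriv φ τ * deriv (deriv φ) τ +
          (deriv φ τ) ^ 2 * v τ * deriv v τ + deriv v τ * deriv (deriv v) τ =
        c₂ ^ 3 * (1 - H τ ^ 2) ^ 2 * P (H τ) ∧
      deriv g τ = 2 * c₂ ^ 3 * (1 - H τ ^ 2) ^ 2 * P (H τ) := by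
  set T : ℝ → ℝ := fun τ => Real.tanh (c₂ * τ - c₃) with hT
  have hTd : ∀ τ, HasDerivAt T (c₂ * (1 - T τ ^ 2)) τ := fun τ => inner_hasDerivAt c₂ c₃ τ
  -- first derivative of φ and v
  have hφd : ∀ τ, HasDerivAt φ (c₁ * c₂ * (1 - T τ ^ 2)) τ := by
    intro τ
    have : HasDerivAt (fun τ => c₁ * T τ + c₄) (c₁ * (c₂ * (1 - T τ ^ 2))) τ :=
      ((hTd τ).const_mul c₁).add_const c₄
    have hfe : φ = fun τ => c₁ * T τ + c₄ := funext hφ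
    rw [hfe]; simpa [mul_assoc] using this
  have hvd : ∀ τ, HasDerivAt v (d₁ * c₂ * (1 - T τ ^ 2)) τ := by
    intro τ
    have : HasDerivAt (fun τ => d₁ * T τ + d₄) (d₁ * (c₂ * (1 - T τ ^ 2))) τ :=
      ((hTd τ).const_mul d₁).add_const d₄
    have hfe : v = fun τ => d₁ * T τ + d₄ := funext hv
    rw [hfe]; simpa [mul_assoc] using this
  have hφ' : deriv φ = fun τ => c₁ * c₂ * (1 - T τ ^ 2) := funext fun τ => (hφd τ).deriv
  have hv' : deriv v = fun τ => d₁ * c₂ * (1 - T τ ^ 2) := funext fun τ => (hvd τ).deriv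
  -- second derivatives
  have hφdd : ∀ τ, HasDerivAt (deriv φ) (c₁ * c₂ * (-(2 * T τ) * (c₂ * (1 - T τ ^ 2)))) τ := by
    intro τ
    rw [hφ']
    have h1 : HasDerivAt (fun τ => 1 - T τ ^ 2) (-(2 * T τ) * (c₂ * (1 - T τ ^ 2))) τ := by
      have := ((hTd τ).pow 2).const_sub 1
      simpa [pow_one, mul_comm, mul_left_comm, mul_assoc] using this
    simpa [mul_assoc] using h1.const_mul (c₁ * c₂)
  have hvdd : ∀ τ, HasDerivAt (deriv v) (d₁ * c₂ * (-(2 * T τ) * (c₂ * (1 - T τ ^ 2)))) τ := by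
    intro τ
    rw [hv']
    have h1 : HasDerivAt (fun τ => 1 - T τ ^ 2) (-(2 * T τ) * (c₂ * (1 - T τ ^ 2))) τ := by
      have := ((hTd τ).pow 2).const_sub 1
      simpa [pow_one, mul_comm, mul_left_comm, mul_assoc] using this
    simpa [mul_assoc] using h1.const_mul (d₁ * c₂)
  have hφ'' : ∀ τ, deriv (deriv φ) τ = c₁ * c₂ * (-(2 * T τ) * (c₂ * (1 - T τ ^ 2))) :=
    fun τ => (hφdd τ).deriv
  have hv'' : ∀ τ, deriv (deriv v) τ = d₁ * c₂ * (-(2 * T τ) * (c₂ * (1 - T τ ^ 2))) :=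
    fun τ => (hvdd τ).deriv
  intro τ
  have key : (v τ) ^ 2 * deriv φ τ * deriv (deriv φ) τ +
      (deriv φ τ) ^ 2 * v τ * deriv v τ + deriv v τ * deriv (deriv v) τ =
      c₂ ^ 3 * (1 - H τ ^ 2) ^ 2 * P (H τ) := by
    rw [hφ'' τ, hv'' τ]
    simp only [hφ', hv', hv τ, hH τ, hP, hT]
    ring
  refine ⟨key, ?_⟩
  -- g' : g = v² (φ')² + (v')²
  have hgd : HasDerivAt g
      (2 * ((v τ) ^ 2 * deriv φ τ * deriv (deriv φ) τ +
        (deriv φ τ) ^ 2 * v τ * deriv v τ + deriv v τ * deriv (deriv v) τ)) τ := by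
    have h1 := (((hvd τ).pow 2).mul ((hφdd τ).pow 2)).add ((hvdd τ).pow 2)
    have hfe : g = fun τ => (v τ) ^ 2 * (deriv φ τ) ^ 2 + (deriv v τ) ^ 2 := funext hg
    rw [hfe]
    refine h1.congr_deriv ?_
    simp only [Pi.pow_apply]
    rw [hφ'' τ, hv'' τ, (hφd τ).deriv, (hvd τ).deriv]
    ring
  rw [hgd.deriv, key]
  ring
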